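/- arXiv:1811.02664 — 3 statements merged into one kernel-verified Lean document; each statement's English description precedes it below -/
import Mathlib

section
/- Let n - 1 > k ≥ 1 and let G be a k-connected graph of order n. Then the Wiener index satisfies W(G) ≤ (1/4)·n·⌊(n+k-2)/k⌋·(2n+k-2-k·⌊(n+k-2)/k⌋). -/
open Finset SimpleGraph

/-- The status of a vertex: sum of distances to all other vertices. -/
noncomputable def status {V : Type*} [Fintype V] (G : SimpleGraph V) (x : V) : ℕ :=
  ∑ y, G.dist x y

/-- The Wiener index: sum of distances over unordered pairs of vertices. -/
noncomputable def wiener {V : Type*} [Fintype V] [DecidableEq V] (G : SimpleGraph V) : ℚ :=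
  (∑ p ∈ Finset.univ.offDiag, (G.dist p.1 p.2 : ℚ)) / 2

/-- Eccentricity of a vertex. -/
noncomputable def ecc {V : Type*} [Fintype V] (G : SimpleGraph V) (x : V) : ℕ :=
  Finset.univ.sup (fun y => G.dist x y)

/-- Diameter: maximum distance between pairs of vertices. -/
noncomputable def graphDiam {V : Type*} [Fintype V] (G : SimpleGraph V) : ℕ :=
  Finset.univ.sup (fun p : V × V => G.dist p.1 p.2)

/-- The set of vertices at distance exactly `i` from `x`. -/
noncomputable def sphere {V : Type*} [Fintype V] [DecidableEq V] (G : SimpleGraph V) (x : V) (i : ℕ) :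
    Finset V :=
  Finset.univ.filter (fun y => G.dist x y = i)

/-- `G` is `k`-connected: more than `k` vertices and removing any `k-1` vertices
leaves a connected graph. -/
def IsKConnected {V : Type*} [Fintype V] (G : SimpleGraph V) (k : ℕ) : Prop :=
  k < Fintype.card V ∧
    ∀ S : Finset V, S.card ≤ k - 1 → (G.induce ((↑S : Set V)ᶜ)).Connected
/-- Circular distance between two positions on a cycle of length `n`. -/
def circDist (n : ℕ) (i j : Fin n) : ℕ :=
  min ((i.val + n - j.val) % n) ((j.val + n - i.val) % n)

lemma circDist_comm (n : ℕ) (i j : Fin n) : circDist n i j = circDist n j i := by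
  unfold circDist; exact min_comm _ _

/-- The Harary graph `H_{k,n}` for `k` even: each vertex is adjacent to the
nearest `k/2` vertices in each direction around the circle. -/
def hararyEven (k n : ℕ) : SimpleGraph (Fin n) where
  Adj i j := i ≠ j ∧ circDist n i j ≤ k / 2
  symm := by
    constructor
    intro i j h
    exact ⟨h.1.symm, by rw [circDist_comm]; exact h.2⟩
  loopless := ⟨fun i h => h.1 rfl⟩

/-- The Harary graph `H_{k,n}` for `k` odd and `n` even: each vertex is adjacent to
the nearest `(k-1)/2` vertices in each direction and to the diametrically opposite
vertex. -/
def hararyOddEven (k n : ℕ) : SimpleGraph (Fin n) where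
  Adj i j := i ≠ j ∧ (circDist n i j ≤ (k - 1) / 2 ∨ circDist n i j = n / 2)
  symm := by
    constructor
    intro i j h
    refine ⟨h.1.symm, ?_⟩
    rw [circDist_comm]; exact h.2
  loopless := ⟨fun i h => h.1 rfl⟩

/-- The Harary graph `H_{k,n}` for `k` and `n` both odd: obtained from `H_{k-1,n}` by
adding an edge between vertices `a` and `a + (n-1)/2` for `0 ≤ a ≤ (n-1)/2`. -/
def hararyOddOdd (k n : ℕ) : SimpleGraph (Fin n) where
  Adj i j := i ≠ j ∧ (circDist n i j ≤ (k - 1) / 2 ∨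
    ∃ a : Fin n, a.val ≤ (n - 1) / 2 ∧
      ((i = a ∧ j.val = (a.val + (n - 1) / 2) % n) ∨
       (j = a ∧ i.val = (a.val + (n - 1) / 2) % n)))
  symm := by
    constructor
    intro i j h
    refine ⟨h.1.symm, ?_⟩
    rcases h.2 with h2 | ⟨a, ha, hc⟩
    · left; rw [circDist_comm]; exact h2
    · right; exact ⟨a, ha, hc.symm⟩
  loopless := ⟨fun i h => h.1 rfl⟩
lemma walk_ivt {V : Type*} {G : SimpleGraph V} (hc : G.Connected) (x : V) {a b : V}
    (p : G.Walk a b) (i : ℕ) (ha : G.dist x a ≤ i) (hb : i ≤ G.dist x b) :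
    ∃ c ∈ p.support, G.dist x c = i := by
  induction p with
  | nil => exact ⟨_, by simp, le_antisymm ha hb⟩
  | @cons u v w h q ih =>
    by_cases hu : G.dist x u = i
    · exact ⟨u, by simp, hu⟩
    · have h1 : G.dist u v = 1 := dist_eq_one_iff_adj.mpr h
      have h2 : G.dist x v ≤ i := by
        have := hc.dist_triangle (u := x) (v := u) (w := v)
        omega
      obtain ⟨c, hc1, hc2⟩ := ih h2 hb
      exact ⟨c, by simp [hc1], hc2⟩

lemma conn_of_kConn {V : Type*} [Fintype V] {G : SimpleGraph V} {k : ℕ}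
    (hG : IsKConnected G k) : G.Connected := by
  have h0 := hG.2 ∅ (by simp)
  rw [Finset.coe_empty, Set.compl_empty] at h0
  exact (induceUnivIso G).connected_iff.mp h0

lemma sphere_card_ge {V : Type*} [Fintype V] [DecidableEq V] {G : SimpleGraph V} {k : ℕ}
    (hG : IsKConnected G k) (hk : 1 ≤ k) (x z : V) (i : ℕ)
    (hi : 1 ≤ i) (hz : i < G.dist x z) :
    k ≤ (sphere G x i).card := by
  have hc : G.Connected := conn_of_kConn hG
  by_contra hlt
  push_neg at hlt
  have hcard : (sphere G x i).card ≤ k - 1 := by omega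
  have hconn := hG.2 _ hcard
  have hx : x ∈ ((↑(sphere G x i) : Set V)ᶜ) := by
    simp only [Set.mem_compl_iff, Finset.coe_filter, sphere, Set.mem_setOf_eq, Finset.mem_coe,
      Finset.mem_filter]
    intro hmem
    have : G.dist x x = 0 := G.dist_self
    omega
  have hzm : z ∈ ((↑(sphere G x i) : Set V)ᶜ) := by
    simp only [Set.mem_compl_iff, Finset.coe_filter, sphere, Set.mem_setOf_eq, Finset.mem_coe,
      Finset.mem_filter]
    intro hmem
    omega
  obtain ⟨w⟩ := hconn.preconnected ⟨x, hx⟩ ⟨z, hzm⟩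
  obtain ⟨c, hc1, hc2⟩ := walk_ivt hc x (w.map (SimpleGraph.Embedding.induce _).toHom) i
    (by show G.dist x x ≤ i; rw [G.dist_self]; omega) (le_of_lt hz)
  rw [SimpleGraph.Walk.support_map] at hc1
  obtain ⟨c', hc'1, hc'2⟩ := List.mem_map.mp hc1
  apply c'.2
  subst hc'2
  simp only [sphere, Finset.mem_coe, Finset.mem_filter]
  exact ⟨Finset.mem_univ _, hc2⟩

lemma layer_count {V : Type*} [Fintype V] [DecidableEq V] {G : SimpleGraph V} {k : ℕ}
    (hG : IsKConnected G k) (hk : 1 ≤ k) (x : V) (i : ℕ) (hi : 1 ≤ i) (hie : i ≤ ecc G x) :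
    (univ.filter (fun y => i ≤ G.dist x y)).card + (k * (i - 1) + 1) ≤ Fintype.card V := by
  obtain ⟨z, _, hz⟩ := Finset.exists_mem_eq_sup (univ : Finset V) ⟨x, mem_univ x⟩
    (fun y => G.dist x y)
  unfold ecc at hie
  rw [hz] at hie
  have hB : (univ.filter (fun y => G.dist x y < i)).card = ∑ j ∈ range i, (sphere G x j).card := by
    rw [Finset.card_eq_sum_card_fiberwise (f := fun y => G.dist x y) (t := range i)
      (fun y hy => by simpa using (Finset.mem_filter.mp hy).2)]
    refine Finset.sum_congr rfl fun j hj => ?_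
    congr 1
    ext y
    simp only [sphere, Finset.mem_filter, Finset.mem_univ, true_and, Finset.mem_range] at *
    omega
  have hsplit : (univ.filter (fun y => G.dist x y < i)).card
      + (univ.filter (fun y => i ≤ G.dist x y)).card = Fintype.card V := by
    rw [← Finset.card_univ]
    have := Finset.card_filter_add_card_filter_not (s := (univ : Finset V))
      (p := fun y => G.dist x y < i)
    simpa [not_lt] using this
  obtain ⟨m, rfl⟩ : ∃ m, i = m + 1 := ⟨i - 1, by omega⟩
  have hlow : k * m + 1 ≤ ∑ j ∈ range (m + 1), (sphere G x j).card := by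
    rw [Finset.sum_range_succ']
    have h0 : 1 ≤ (sphere G x 0).card :=
      Finset.card_pos.mpr ⟨x, by simp [sphere, G.dist_self]⟩
    have h1 : ∀ j ∈ range m, k ≤ (sphere G x (j + 1)).card := fun j hj => by
      refine sphere_card_ge hG hk x z (j + 1) (by omega) ?_
      have := Finset.mem_range.mp hj; omega
    calc k * m + 1 = (∑ _j ∈ range m, k) + 1 := by
          simp [Finset.sum_const, Finset.card_range, mul_comm]
      _ ≤ _ := add_le_add (Finset.sum_le_sum h1) h0
  have hkm : k * (m + 1 - 1) = k * m := by rw [Nat.add_sub_cancel]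
  omega

lemma status_eq {V : Type*} [Fintype V] [DecidableEq V] (G : SimpleGraph V) (x : V) :
    status G x = ∑ i ∈ Icc 1 (ecc G x), (univ.filter (fun y => i ≤ G.dist x y)).card := by
  unfold status
  calc ∑ y, G.dist x y = ∑ y, ((Icc 1 (ecc G x)).filter (· ≤ G.dist x y)).card := by
        refine Finset.sum_congr rfl fun y _ => ?_
        have hd : G.dist x y ≤ ecc G x := Finset.le_sup (mem_univ y)
        have heq : (Icc 1 (ecc G x)).filter (· ≤ G.dist x y) = Icc 1 (G.dist x y) := by
          ext j; simp only [Finset.mem_filter, Finset.mem_Icc]; omega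
        rw [heq, Nat.card_Icc]; omega
    _ = ∑ y, ∑ i ∈ Icc 1 (ecc G x), if i ≤ G.dist x y then 1 else 0 := by
        refine Finset.sum_congr rfl fun y _ => ?_
        rw [Finset.card_filter]
    _ = ∑ i ∈ Icc 1 (ecc G x), ∑ y, if i ≤ G.dist x y then 1 else 0 := Finset.sum_comm
    _ = _ := by
        refine Finset.sum_congr rfl fun i _ => ?_
        rw [Finset.card_filter]

/-- In a `k`-connected graph of order `n` with `n - 1 > k ≥ 1`, the Wiener index
satisfies `W(G) ≤ (1/4)·n·⌊(n+k-2)/k⌋·(2n+k-2-k·⌊(n+k-2)/k⌋)`. -/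
theorem wiener_le_of_kConnected (n k : ℕ) (hk : 1 ≤ k) (hn : k < n - 1)
    (G : SimpleGraph (Fin n)) (hG : IsKConnected G k) :
    wiener G ≤ (1 / 4 : ℚ) * (n : ℚ) * ((n + k - 2) / k : ℕ) *
      (2 * (n : ℚ) + (k : ℚ) - 2 - (k : ℚ) * ((n + k - 2) / k : ℕ)) := by
  set t : ℕ := (n + k - 2) / k with htdef
  have hn3 : 3 ≤ n := by omega
  have hcard : Fintype.card (Fin n) = n := Fintype.card_fin n
  have hkpos : 0 < k := hk
  have hsplitnk : n + k - 2 = (n - 2) + k := by omega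
  have htalt : t = (n - 2) / k + 1 := by
    rw [htdef, hsplitnk, Nat.add_div_right _ hkpos]
  have ht1 : 1 ≤ t := by rw [htalt]; exact Nat.le_add_left 1 _
  have hktn : k * (t - 1) ≤ n - 2 := by
    rw [htalt]
    simpa [Nat.mul_comm] using Nat.div_mul_le_self (n - 2) k
  -- eccentricity bound
  have hecc : ∀ x : Fin n, ecc G x ≤ t := by
    intro x
    rcases Nat.eq_zero_or_pos (ecc G x) with h0 | hpos
    · omega
    · set e := ecc G x with hedef
      have hlc := layer_count hG hk x e hpos le_rfl
      rw [hcard] at hlc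
      obtain ⟨z, _, hz⟩ := Finset.exists_mem_eq_sup (univ : Finset (Fin n)) ⟨x, mem_univ x⟩
        (fun y => G.dist x y)
      have hzd : e ≤ G.dist x z := by
        unfold e
        unfold ecc
        rw [hz]
      have hNpos : 1 ≤ (univ.filter (fun y => e ≤ G.dist x y)).card :=
        Finset.card_pos.mpr ⟨z, Finset.mem_filter.mpr ⟨mem_univ z, hzd⟩⟩
      have hke : k * (e - 1) ≤ n - 2 := by omega
      have he1 : e - 1 ≤ (n - 2) / k := Nat.le_div_iff_mul_le hkpos |>.mpr
        (by rw [Nat.mul_comm]; exact hke)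
      omega
  -- cast facts
  have hktq : (k : ℚ) * (t : ℚ) ≤ (n : ℚ) + (k : ℚ) - 2 := by
    have h1 : t * k ≤ n + k - 2 := by
      rw [htdef]
      exact Nat.div_mul_le_self (n + k - 2) k
    have h2 : ((t * k : ℕ) : ℚ) ≤ ((n + k - 2 : ℕ) : ℚ) := Nat.cast_le.mpr h1
    rw [Nat.cast_sub (by omega : 2 ≤ n + k)] at h2
    push_cast at h2
    linarith
  -- per-vertex layer bound in ℚ
  have hN : ∀ x : Fin n, ∀ i, 1 ≤ i → i ≤ ecc G x →
      (((univ.filter (fun y => i ≤ G.dist x y)).card : ℚ)) ≤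
        (n : ℚ) - 1 - (k : ℚ) * ((i : ℚ) - 1) := by
    intro x i hi hie
    obtain ⟨m, rfl⟩ : ∃ m, i = m + 1 := ⟨i - 1, by omega⟩
    have := layer_count hG hk x (m + 1) hi hie
    rw [hcard] at this
    have h2 : ((univ.filter (fun y => m + 1 ≤ G.dist x y)).card : ℚ) + ((k : ℚ) * m + 1)
        ≤ (n : ℚ) := by
      exact_mod_cast this
    push_cast
    linarith
  have gauss : ∀ m : ℕ, (∑ i ∈ range m, (i : ℚ)) = m * ((m : ℚ) - 1) / 2 := by
    intro m
    induction m with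
    | zero => simp
    | succ p ih => rw [Finset.sum_range_succ, ih]; push_cast; ring
  -- per-vertex status bound
  have hstatus : ∀ x : Fin n, (status G x : ℚ) ≤
      (t : ℚ) * ((n : ℚ) - 1) - (k : ℚ) * ((t : ℚ) * ((t : ℚ) - 1) / 2) := by
    intro x
    have h1 : (status G x : ℚ)
        = ∑ i ∈ Icc 1 (ecc G x), (((univ.filter (fun y => i ≤ G.dist x y)).card : ℚ)) := by
      rw [status_eq]
      push_cast
      rfl
    rw [h1]
    have h2 : ∑ i ∈ Icc 1 (ecc G x), (((univ.filter (fun y => i ≤ G.dist x y)).card : ℚ))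
        ≤ ∑ i ∈ Icc 1 (ecc G x), ((n : ℚ) - 1 - (k : ℚ) * ((i : ℚ) - 1)) :=
      Finset.sum_le_sum fun i hi => hN x i (Finset.mem_Icc.mp hi).1 (Finset.mem_Icc.mp hi).2
    have h3 : ∑ i ∈ Icc 1 (ecc G x), ((n : ℚ) - 1 - (k : ℚ) * ((i : ℚ) - 1))
        ≤ ∑ i ∈ Icc 1 t, ((n : ℚ) - 1 - (k : ℚ) * ((i : ℚ) - 1)) := by
      apply Finset.sum_le_sum_of_subset_of_nonneg
      · exact Finset.Icc_subset_Icc_right (hecc x)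
      · intro i hi _
        have hit : i ≤ t := (Finset.mem_Icc.mp hi).2
        have hiq : (i : ℚ) ≤ (t : ℚ) := Nat.cast_le.mpr hit
        have : (k : ℚ) * ((i : ℚ) - 1) ≤ (k : ℚ) * ((t : ℚ) - 1) := by
          apply mul_le_mul_of_nonneg_left (by linarith) (by positivity)
        nlinarith [hktq]
    have h4 : ∑ i ∈ Icc 1 t, ((n : ℚ) - 1 - (k : ℚ) * ((i : ℚ) - 1))
        = (t : ℚ) * ((n : ℚ) - 1) - (k : ℚ) * ((t : ℚ) * ((t : ℚ) - 1) / 2) := by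
      rw [show Icc 1 t = Ico 1 (t + 1) from (Finset.Ico_add_one_right_eq_Icc 1 t).symm,
        Finset.sum_Ico_eq_sum_range]
      simp only [Nat.add_sub_cancel]
      have : ∀ i ∈ range t, (n : ℚ) - 1 - (k : ℚ) * (((1 + i : ℕ) : ℚ) - 1)
          = (n : ℚ) - 1 - (k : ℚ) * (i : ℚ) := by
        intro i _; push_cast; ring
      rw [Finset.sum_congr rfl this, Finset.sum_sub_distrib, Finset.sum_const,
        Finset.card_range, ← Finset.mul_sum, gauss t, nsmul_eq_mul]
    linarith
  -- wiener as sum of statuses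
  have hwiener : wiener G = (∑ x, (status G x : ℚ)) / 2 := by
    unfold wiener
    congr 1
    have h1 : ∑ p ∈ univ.offDiag, (G.dist p.1 p.2 : ℚ)
        = ∑ p ∈ univ ×ˢ univ, (G.dist p.1 p.2 : ℚ) := by
      apply Finset.sum_subset
      · intro p _
        simp [Finset.mem_product]
      · intro p _ hp
        have hpe : p.1 = p.2 := by
          by_contra hne
          exact hp (Finset.mem_offDiag.mpr ⟨mem_univ _, mem_univ _, hne⟩)
        rw [hpe, G.dist_self]
        norm_num
    rw [h1, Finset.sum_product]
    refine Finset.sum_congr rfl fun x _ => ?_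
    rw [status]
    push_cast
    rfl
  rw [hwiener]
  have hsum : ∑ x, (status G x : ℚ)
      ≤ (n : ℚ) * ((t : ℚ) * ((n : ℚ) - 1) - (k : ℚ) * ((t : ℚ) * ((t : ℚ) - 1) / 2)) := by
    calc ∑ x, (status G x : ℚ)
        ≤ ∑ _x : Fin n, ((t : ℚ) * ((n : ℚ) - 1) - (k : ℚ) * ((t : ℚ) * ((t : ℚ) - 1) / 2)) :=
          Finset.sum_le_sum fun x _ => hstatus x
      _ = _ := by
          rw [Finset.sum_const, Finset.card_univ, hcard, nsmul_eq_mul]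
  calc (∑ x, (status G x : ℚ)) / 2
      ≤ (n : ℚ) * ((t : ℚ) * ((n : ℚ) - 1) - (k : ℚ) * ((t : ℚ) * ((t : ℚ) - 1) / 2)) / 2 := by
        linarith
    _ = (1 / 4 : ℚ) * (n : ℚ) * (t : ℚ) *
        (2 * (n : ℚ) + (k : ℚ) - 2 - (k : ℚ) * (t : ℚ)) := by ring
end

section
/- Let n - 1 > k ≥ 2 with k even, and let D = ⌊(n+k-2)/k⌋. Then every vertex x of the Harary graph H_{k,n} has status W(x,H_{k,n}) = (1/2)·D·(2n+k-2-kD). -/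
open Finset SimpleGraph

lemma Int.bmod_eq_self_of {b : ℤ} {n : ℕ} (h1 : -(n:ℤ) ≤ 2*b) (h2 : 2*b < n) :
    b.bmod n = b := by
  have hn : 0 < (n:ℤ) := by omega
  rw [Int.bmod_def]
  rcases le_or_gt 0 b with hb | hb
  · rw [Int.emod_eq_of_lt hb (by omega)]
    have : 0 ≤ (n:ℤ)+1-2*b := by omega
    omega
  · have : b % n = b + n := by
      have := Int.add_mul_emod_self_left (a := b) (b := (n:ℤ)) (c := 1)
      rw [mul_one] at this
      rw [← this, Int.emod_eq_of_lt (by omega) (by omega)]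
    rw [this]
    omega

lemma Int.two_mul_natAbs_bmod_le (x : ℤ) {n : ℕ} (hn : 0 < n) :
    2 * (x.bmod n).natAbs ≤ n := by
  have h1 : 0 ≤ x % n := Int.emod_nonneg x (by positivity)
  have h2 : x % n < n := Int.emod_lt_of_pos x (by exact_mod_cast hn)
  rw [Int.bmod_def]
  split <;> omega

lemma circDist_eq_natAbs_bmod {n : ℕ} (i j : Fin n) :
    circDist n i j = (((i:ℤ) - (j:ℤ)).bmod n).natAbs := by
  have hn : 0 < n := i.pos
  obtain ⟨a, ha⟩ := i
  obtain ⟨b, hb⟩ := j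
  simp only [circDist, Fin.val_mk]
  have hA : (a + n - b) % n = if b ≤ a then a - b else a + n - b := by
    split
    · have : a + n - b = (a - b) + n := by omega
      rw [this, Nat.add_mod_right, Nat.mod_eq_of_lt (by omega)]
    · exact Nat.mod_eq_of_lt (by omega)
  have hB : (b + n - a) % n = if a ≤ b then b - a else b + n - a := by
    split
    · have : b + n - a = (b - a) + n := by omega
      rw [this, Nat.add_mod_right, Nat.mod_eq_of_lt (by omega)]
    · exact Nat.mod_eq_of_lt (by omega)
  have he : ((a:ℤ) - b) % n = if b ≤ a then ((a:ℤ) - b) else ((a:ℤ) - b + n) := by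
    split
    · exact Int.emod_eq_of_lt (by omega) (by omega)
    · rw [show ((a:ℤ) - b) % n = ((a:ℤ) - b + n) % n from (Int.add_emod_right _ _).symm]
      exact Int.emod_eq_of_lt (by omega) (by omega)
  rw [hA, hB, Int.bmod_def, he]
  split <;> split <;> omega

lemma bmod_congr {a b : ℤ} {n : ℕ} (h : a % n = b % n) : a.bmod n = b.bmod n := by
  rw [← Int.emod_bmod (x := a), h, Int.emod_bmod]

lemma natAbs_bmod_le_natAbs (x : ℤ) {n : ℕ} (hn : 0 < n) :
    (x.bmod n).natAbs ≤ x.natAbs := by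
  rcases le_or_gt (n:ℤ) (2 * x.natAbs) with h | h
  · have := Int.two_mul_natAbs_bmod_le x hn
    omega
  · have hx : x.bmod n = x := Int.bmod_eq_self_of (by omega) (by omega)
    rw [hx]

lemma circDist_triangle {n : ℕ} (a b c : Fin n) :
    circDist n a c ≤ circDist n a b + circDist n b c := by
  have hn : 0 < n := a.pos
  rw [circDist_eq_natAbs_bmod, circDist_eq_natAbs_bmod, circDist_eq_natAbs_bmod]
  have h1 : ((a:ℤ) - c) = ((a:ℤ) - b) + ((b:ℤ) - c) := by ring
  rw [h1, Int.add_bmod]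
  calc ((((a:ℤ) - b).bmod n + ((b:ℤ) - c).bmod n).bmod n).natAbs
      ≤ (((a:ℤ) - b).bmod n + ((b:ℤ) - c).bmod n).natAbs :=
        natAbs_bmod_le_natAbs _ hn
    _ ≤ (((a:ℤ) - b).bmod n).natAbs + (((b:ℤ) - c).bmod n).natAbs :=
        Int.natAbs_add_le _ _

lemma circDist_self {n : ℕ} (x : Fin n) : circDist n x x = 0 := by
  unfold circDist
  have h : x.val + n - x.val = n := by omega
  simp [h]

lemma eq_of_circDist_eq_zero {n : ℕ} {x y : Fin n} (h : circDist n x y = 0) : x = y := by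
  have hn : 0 < n := x.pos
  rw [circDist_eq_natAbs_bmod] at h
  have h0 : ((x:ℤ) - y).bmod n = 0 := by omega
  have h1 : ((x:ℤ) - y) % n = 0 := by
    have := Int.bmod_emod (x := ((x:ℤ) - y)) (m := n)
    rw [h0] at this
    simpa using this.symm
  have h2 : (n:ℤ) ∣ ((x:ℤ) - y) := Int.dvd_of_emod_eq_zero h1
  have h3 : ((x:ℤ) - y) = 0 := by
    refine Int.eq_zero_of_abs_lt_dvd h2 ?_
    have := x.isLt; have := y.isLt
    rw [abs_sub_lt_iff]
    constructor <;> (push_cast; omega)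
  have : (x:ℤ) = (y:ℤ) := by omega
  exact Fin.ext (by exact_mod_cast this)

lemma walk_bound {k n : ℕ} {x y : Fin n} (p : (hararyEven k n).Walk x y) :
    circDist n x y ≤ (k / 2) * p.length := by
  induction p with
  | nil => simp [circDist_self]
  | @cons u v w h p ih =>
    calc circDist n u w ≤ circDist n u v + circDist n v w := circDist_triangle u v w
      _ ≤ k / 2 + k / 2 * p.length := Nat.add_le_add (show u ≠ v ∧ circDist n u v ≤ k / 2 from h).2 ih
      _ = k / 2 * (SimpleGraph.Walk.cons h p).length := by
        simp [SimpleGraph.Walk.length_cons]; ring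

lemma harary_walk_exists {k n r : ℕ} (hr : 0 < r) (hkr : k / 2 = r) (h2r : 2 * r + 2 ≤ n) :
    ∀ c : ℕ, ∀ x y : Fin n, circDist n x y = c →
      ∃ p : (hararyEven k n).Walk x y, p.length ≤ (c + r - 1) / r := by
  intro c
  induction c using Nat.strong_induction_on with
  | _ c ih =>
    intro x y hc
    have hn : 0 < n := x.pos
    rcases Nat.eq_zero_or_pos c with rfl | hcpos
    · obtain rfl : x = y := eq_of_circDist_eq_zero hc
      exact ⟨SimpleGraph.Walk.nil, by simp⟩
    have hxy : x ≠ y := by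
      intro h; subst h; rw [circDist_self] at hc; omega
    rcases le_or_gt c r with hcr | hcr
    · refine ⟨SimpleGraph.Walk.cons (show (hararyEven k n).Adj x y from ⟨hxy, by omega⟩) SimpleGraph.Walk.nil, ?_⟩
      simp only [SimpleGraph.Walk.length_cons, SimpleGraph.Walk.length_nil]
      have h1 : r ≤ c + r - 1 := by omega
      calc 1 = r / r := (Nat.div_self hr).symm
        _ ≤ (c + r - 1) / r := Nat.div_le_div_right h1
    · -- c > r : step towards y
      obtain ⟨t, ht_def⟩ : ∃ t : ℤ, t = ((x:ℤ) - (y:ℤ)).bmod n := ⟨_, rfl⟩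
      have htabs : t.natAbs = c := by rw [ht_def, ← hc, circDist_eq_natAbs_bmod]
      have ht2 : 2 * t.natAbs ≤ n := ht_def ▸ Int.two_mul_natAbs_bmod_le _ hn
      obtain ⟨s, hs_def⟩ : ∃ s : ℤ, s = if 0 < t then (r:ℤ) else -(r:ℤ) := ⟨_, rfl⟩
      have hsabs : s.natAbs = r := by rw [hs_def]; split <;> simp
      have hz_lt : (((x:ℤ) - s) % n).toNat < n := by
        have h1 : 0 ≤ ((x:ℤ) - s) % n := Int.emod_nonneg _ (by positivity)
        have h2 : ((x:ℤ) - s) % n < n := Int.emod_lt_of_pos _ (by exact_mod_cast hn)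
        omega
      obtain ⟨z, hzval⟩ : ∃ z : Fin n, (z:ℤ) = ((x:ℤ) - s) % n :=
        ⟨⟨(((x:ℤ) - s) % n).toNat, hz_lt⟩, by
          simp only [Fin.val_mk]
          exact Int.toNat_of_nonneg (Int.emod_nonneg _ (by positivity))⟩
      have hxy_mod : ((x:ℤ) - (y:ℤ)) % n = t % n := (ht_def ▸ Int.bmod_emod).symm
      have hmod_xz : ((x:ℤ) - (z:ℤ)) % n = s % n := by
        rw [hzval, Int.sub_emod ((x:ℤ)), Int.emod_emod_of_dvd _ dvd_rfl, ← Int.sub_emod]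
        ring_nf
      have hsrange : -(n:ℤ) ≤ 2 * s ∧ 2 * s < n := by
        rw [hs_def]; split <;> constructor <;> push_cast <;> omega
      have hcd_xz : circDist n x z = r := by
        rw [circDist_eq_natAbs_bmod, bmod_congr hmod_xz,
          Int.bmod_eq_self_of hsrange.1 hsrange.2]
        exact hsabs
      have hmod_zy : ((z:ℤ) - (y:ℤ)) % n = (t - s) % n := by
        have step : ((z:ℤ) - (y:ℤ)) ≡ t - s [ZMOD n] := by
          calc ((z:ℤ) - (y:ℤ)) ≡ ((x:ℤ) - s) - y [ZMOD n] := by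
                exact Int.ModEq.sub_right _ (hzval ▸ Int.emod_emod_of_dvd _ dvd_rfl)
            _ = ((x:ℤ) - y) - s := by ring
            _ ≡ t - s [ZMOD n] := Int.ModEq.sub_right _ hxy_mod
        exact step
      have hts : (t - s).natAbs = c - r := by
        rw [hs_def]
        rcases lt_trichotomy t 0 with h | h | h
        · rw [if_neg (by omega)]; omega
        · omega
        · rw [if_pos h]; omega
      have hcd_zy : circDist n z y = c - r := by
        rw [circDist_eq_natAbs_bmod, bmod_congr hmod_zy,
          Int.bmod_eq_self_of (by omega) (by omega)]
        exact hts
      obtain ⟨q, hq⟩ := ih (c - r) (by omega) z y hcd_zy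
      have hxz : x ≠ z := by
        intro h; subst h; rw [circDist_self] at hcd_xz; omega
      refine ⟨SimpleGraph.Walk.cons (show (hararyEven k n).Adj x z from ⟨hxz, le_of_eq (hcd_xz.trans hkr.symm)⟩) q, ?_⟩
      simp only [SimpleGraph.Walk.length_cons]
      have h1 : (c - r + r - 1) / r = (c - 1) / r := by
        congr 1; omega
      have h2 : (c + r - 1) / r = (c - 1) / r + 1 := by
        rw [show c + r - 1 = (c - 1) + r by omega, Nat.add_div_right _ hr]
      omega

lemma harary_dist {k n r : ℕ} (hr : 0 < r) (hkr : k / 2 = r) (h2r : 2 * r + 2 ≤ n)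
    (x y : Fin n) :
    (hararyEven k n).dist x y = (circDist n x y + r - 1) / r := by
  obtain ⟨p, hp⟩ := harary_walk_exists hr hkr h2r (circDist n x y) x y rfl
  have hub : (hararyEven k n).dist x y ≤ (circDist n x y + r - 1) / r :=
    (SimpleGraph.dist_le p).trans hp
  have hreach : (hararyEven k n).Reachable x y := ⟨p⟩
  obtain ⟨q, hq⟩ := hreach.exists_walk_length_eq_dist
  have hlb := walk_bound q
  rw [hq, hkr] at hlb
  refine le_antisymm hub ?_
  have : (circDist n x y + r - 1) / r < (hararyEven k n).dist x y + 1 := by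
    rw [Nat.div_lt_iff_lt_mul hr]
    have hexp : ((hararyEven k n).dist x y + 1) * r = r * (hararyEven k n).dist x y + r := by
      ring
    omega
  omega

lemma count_layer {n s : ℕ} (hs : 2 * s + 2 ≤ n) :
    ((Finset.range n).filter (fun j => s < min j (n - j))).card = n - 1 - 2 * s := by
  have : (Finset.range n).filter (fun j => s < min j (n - j)) = Finset.Ico (s + 1) (n - s) := by
    ext j
    simp only [Finset.mem_filter, Finset.mem_range, Finset.mem_Ico, lt_min_iff]
    omega
  rw [this, Nat.card_Ico]
  omega

lemma ceil_eq_card {m r D : ℕ} (hr : 0 < r) (hmD : m ≤ r * D) :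
    (m + r - 1) / r = ((Finset.range D).filter (fun t => r * t < m)).card := by
  have hiff : ∀ t : ℕ, (r * t < m ↔ t < (m + r - 1) / r) := by
    intro t
    constructor
    · intro h
      have h2 : (t + 1) * r ≤ m + r - 1 := by
        have : (t + 1) * r = r * t + r := by ring
        omega
      have := (Nat.le_div_iff_mul_le hr).mpr h2
      omega
    · intro h
      have h2 := (Nat.le_div_iff_mul_le hr).mp (by omega : t + 1 ≤ (m + r - 1) / r)
      have : (t + 1) * r = r * t + r := by ring
      omega
  have hceil : (m + r - 1) / r ≤ D := by
    have : (m + r - 1) / r < D + 1 := by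
      rw [Nat.div_lt_iff_lt_mul hr]
      have : (D + 1) * r = r * D + r := by ring
      omega
    omega
  have : (Finset.range D).filter (fun t => r * t < m) = Finset.range ((m + r - 1) / r) := by
    ext t
    simp only [Finset.mem_filter, Finset.mem_range]
    constructor
    · intro ⟨_, h⟩; exact (hiff t).mp h
    · intro h; exact ⟨lt_of_lt_of_le h hceil, (hiff t).mpr h⟩
  rw [this, Finset.card_range]

lemma key_sum {n r D : ℕ} (hr : 0 < r) (h2r : 2 * r + 2 ≤ n)
    (hD : D = (n + 2 * r - 2) / (2 * r)) :
    ((∑ j ∈ Finset.range n, (min j (n - j) + r - 1) / r : ℕ) : ℚ)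
      = D * n - r * D * (D - 1) - D := by
  have hrr : 0 < 2 * r := by omega
  obtain ⟨m, hm, hmlt⟩ : ∃ m, n + 2 * r - 2 = 2 * r * D + m ∧ m < 2 * r := by
    refine ⟨(n + 2 * r - 2) % (2 * r), ?_, Nat.mod_lt _ hrr⟩
    rw [hD]; exact (Nat.div_add_mod _ _).symm
  rw [show 2 * r * D = 2 * (r * D) from by ring] at hm
  -- 2rD ≥ n - 1 and 2r(D-1) ≤ n - 2
  have hDpos : 1 ≤ D := by
    rw [hD]; exact Nat.one_le_div_iff hrr |>.mpr (by omega)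
  have hge : n - 1 ≤ 2 * (r * D) := by omega
  have S_eq : ∀ j ∈ Finset.range n,
      (min j (n - j) + r - 1) / r = ((Finset.range D).filter (fun t => r * t < min j (n - j))).card := by
    intro j hj
    refine ceil_eq_card hr ?_
    have h2m : 2 * min j (n - j) ≤ n := by omega
    omega
  rw [Finset.sum_congr rfl S_eq]
  simp only [Finset.card_filter]
  rw [Finset.sum_comm]
  have inner_eq : ∀ t ∈ Finset.range D,
      (∑ j ∈ Finset.range n, if r * t < min j (n - j) then 1 else 0) = n - 1 - 2 * (r * t) := by
    intro t ht
    rw [← Finset.card_filter]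
    refine count_layer ?_
    have h1 : r * (t + 1) ≤ r * D := Nat.mul_le_mul_left r (Finset.mem_range.mp ht)
    have h2 : r * (t + 1) = r * t + r := by ring
    omega
  rw [Finset.sum_congr rfl inner_eq]
  -- now evaluate ∑_{t<D} (n - 1 - 2*(r*t))
  have hterm : ∀ t ∈ Finset.range D,
      ((n - 1 - 2 * (r * t) : ℕ) : ℚ) = (n : ℚ) - 1 - 2 * r * t := by
    intro t ht
    have h1 : r * (t + 1) ≤ r * D := Nat.mul_le_mul_left r (Finset.mem_range.mp ht)
    have h2 : r * (t + 1) = r * t + r := by ring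
    have h3 : 2 * (r * t) ≤ n - 1 := by omega
    push_cast [Nat.sub_sub, h3]
    rw [Nat.cast_sub (by omega)]
    push_cast
    ring
  rw [Nat.cast_sum, Finset.sum_congr rfl hterm]
  rw [Finset.sum_sub_distrib, Finset.sum_sub_distrib]
  simp only [Finset.sum_const, Finset.card_range, nsmul_eq_mul, mul_one]
  have hgauss : (∑ t ∈ Finset.range D, (2 * (r:ℚ) * t)) = r * D * (D - 1) := by
    rw [← Finset.mul_sum]
    have : (∑ t ∈ Finset.range D, (t : ℚ)) = D * (D - 1) / 2 := by
      have hnat := Finset.sum_range_id_mul_two D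
      have : ((∑ t ∈ Finset.range D, t : ℕ) : ℚ) * 2 = (D : ℚ) * ((D : ℚ) - 1) := by
        rw [← Nat.cast_ofNat, ← Nat.cast_mul, hnat]
        push_cast [Nat.cast_sub hDpos]
        ring
      push_cast at this ⊢
      linarith
    rw [this]; ring
  rw [hgauss]
  ring

lemma natAbs_bmod_neg_eq_min {n j : ℕ} (hj : j < n) :
    ((-(j:ℤ)).bmod n).natAbs = min j (n - j) := by
  rcases le_or_gt (2 * j) n with h | h
  · rw [Int.bmod_eq_self_of (by omega) (by omega)]
    omega
  · have hcongr : (-(j:ℤ)) % n = ((n:ℤ) - j) % n := by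
      rw [show (n:ℤ) - j = -(j:ℤ) + n from by ring, Int.add_emod_right]
    rw [bmod_congr hcongr, Int.bmod_eq_self_of (by omega) (by omega)]
    omega

lemma circDist_add {n : ℕ} (x j : Fin n) :
    circDist n x (x + j) = min j.val (n - j.val) := by
  have hn : 0 < n := x.pos
  rw [circDist_eq_natAbs_bmod]
  have hval : ((x + j : Fin n) : ℤ) = ((x.val : ℤ) + j.val) % n := by
    rw [Fin.add_def]
    push_cast
    rfl
  have hcongr : ((x:ℤ) - ((x + j : Fin n) : ℤ)) % n = (-(j.val : ℤ)) % n := by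
    have step : ((x:ℤ) - ((x + j : Fin n) : ℤ)) ≡ -(j.val : ℤ) [ZMOD n] := by
      calc ((x:ℤ) - ((x + j : Fin n) : ℤ))
          ≡ (x:ℤ) - ((x.val : ℤ) + j.val) [ZMOD n] := by
            rw [hval]
            exact Int.ModEq.sub_left _ (Int.emod_emod_of_dvd _ dvd_rfl)
        _ = -(j.val : ℤ) := by ring
    exact step
  rw [bmod_congr hcongr]
  exact natAbs_bmod_neg_eq_min j.isLt

/-- For `k` even, `n - 1 > k ≥ 2`, with `D = ⌊(n+k-2)/k⌋`, every vertex of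
`H_{k,n}` has status `(1/2)·D·(2n+k-2-kD)`. -/
theorem hararyEven_status (k n : ℕ) (hk : 2 ≤ k) (hke : Even k) (hn : k < n - 1)
    (x : Fin n) :
    (status (hararyEven k n) x : ℚ) = (1 / 2 : ℚ) * ((n + k - 2) / k : ℕ) *
      (2 * (n : ℚ) + (k : ℚ) - 2 - (k : ℚ) * ((n + k - 2) / k : ℕ)) := by
  obtain ⟨r, rfl⟩ := hke
  have hr : 0 < r := by omega
  have hkr : (r + r) / 2 = r := by omega
  have h2r : 2 * r + 2 ≤ n := by omega
  haveI : NeZero n := ⟨by omega⟩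
  have hstat : status (hararyEven (r + r) n) x
      = ∑ j ∈ Finset.range n, (min j (n - j) + r - 1) / r := by
    unfold status
    have h1 : ∀ y : Fin n, (hararyEven (r + r) n).dist x y = (circDist n x y + r - 1) / r :=
      harary_dist hr hkr h2r x
    rw [Finset.sum_congr rfl (fun y _ => h1 y)]
    rw [← Fin.sum_univ_eq_sum_range (fun j => (min j (n - j) + r - 1) / r) n]
    refine (Fintype.sum_equiv (Equiv.addLeft x)
      (fun j : Fin n => (min j.val (n - j.val) + r - 1) / r)
      (fun y : Fin n => (circDist n x y + r - 1) / r) ?_).symm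
    intro j
    have : Equiv.addLeft x j = x + j := rfl
    simp only [this, circDist_add]
  have hsum := key_sum (D := (n + (r + r) - 2) / (r + r)) hr h2r
    (by rw [show 2 * r = r + r from by ring])
  rw [hstat, hsum]
  have hDpos : (1:ℕ) ≤ (n + (r + r) - 2) / (r + r) := by
    refine (Nat.one_le_div_iff (by omega)).mpr (by omega)
  push_cast
  ring
end

section
/- Let n - 1 > k ≥ 2, let G be a graph whose vertices at distance levels from some vertex x satisfy |N(x,i)| ≥ k for 1 ≤ i ≤ t-1 where t = ecc(x), and suppose the level sets partition V(G) with total size n. Then W(x,G) ≤ (n-1)t - k·t(t-1)/2. -/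
open Finset SimpleGraph

lemma gauss_aux (t : ℕ) : 2 * (∑ i ∈ Finset.Ico 1 t, (t - i)) = t * (t - 1) := by
  induction t with
  | zero => simp
  | succ t ih =>
    rcases Nat.eq_zero_or_pos t with rfl | ht
    · simp
    rw [Finset.sum_Ico_succ_top (by omega)]
    have h1 : ∑ i ∈ Finset.Ico 1 t, (t + 1 - i) = ∑ i ∈ Finset.Ico 1 t, ((t - i) + 1) := by
      apply Finset.sum_congr rfl
      intro i hi
      simp only [Finset.mem_Ico] at hi
      omega
    rw [h1, Finset.sum_add_distrib, Finset.sum_const, Nat.card_Ico, smul_eq_mul, mul_one]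
    have hx : (t + 1) * (t + 1 - 1) = t * (t - 1) + 2 * t := by
      rcases t with _ | u
      · omega
      · simp only [Nat.succ_sub_one]; ring
    omega

/-- If the distance level sets of `x` satisfy `|N(x,i)| ≥ k` for `1 ≤ i ≤ t-1`
where `t = ecc(x)`, in a connected graph of order `n` with `n - 1 > k ≥ 2`, then
`W(x,G) ≤ (n-1)t - k·t(t-1)/2`. -/
theorem status_le_of_sphere_bound (n k : ℕ) (hk : 2 ≤ k) (hn : k < n - 1)
    {V : Type*} [Fintype V] [DecidableEq V] (G : SimpleGraph V)
    (hG : G.Connected) (hcard : Fintype.card V = n) (x : V) (t : ℕ)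
    (ht : ecc G x = t)
    (hlev : ∀ i, 1 ≤ i → i ≤ t - 1 → k ≤ (sphere G x i).card) :
    (status G x : ℚ) ≤ ((n : ℚ) - 1) * t - (k : ℚ) * t * (t - 1) / 2 := by
  classical
  set c : ℕ → ℕ := fun i => (sphere G x i).card with hc
  have hdle : ∀ y : V, G.dist x y ≤ t := by
    intro y
    rw [← ht]
    exact Finset.le_sup (f := fun y => G.dist x y) (Finset.mem_univ y)
  have hmaps : ∀ y ∈ (Finset.univ : Finset V), G.dist x y ∈ Finset.range (t + 1) := by
    intro y _; simp [Nat.lt_succ_iff, hdle y]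
  -- status as fiberwise sum
  have hstat : status G x = ∑ i ∈ Finset.range (t + 1), i * c i := by
    rw [status, ← Finset.sum_fiberwise_of_maps_to hmaps (fun y => G.dist x y)]
    apply Finset.sum_congr rfl
    intro i _
    rw [Finset.sum_congr rfl (fun y hy => (Finset.mem_filter.mp hy).2),
      Finset.sum_const, smul_eq_mul, mul_comm]
    rfl
  -- total count
  have hcount : ∑ i ∈ Finset.range (t + 1), c i = n := by
    rw [← hcard, ← Finset.card_univ, Finset.card_eq_sum_card_fiberwise hmaps]
    rfl
  -- c 0 = 1
  have hc0 : c 0 = 1 := by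
    have : sphere G x 0 = {x} := by
      ext y
      simp only [sphere, Finset.mem_filter, Finset.mem_univ, true_and, Finset.mem_singleton]
      constructor
      · intro h
        exact ((hG.preconnected x y).dist_eq_zero_iff.mp h).symm
      · rintro rfl; simp
    simp [hc, this]
  -- the complementary sum
  have hsplit : (∑ i ∈ Finset.range (t + 1), i * c i)
      + (∑ i ∈ Finset.range (t + 1), (t - i) * c i) = t * n := by
    rw [← Finset.sum_add_distrib, ← hcount, Finset.mul_sum]
    apply Finset.sum_congr rfl
    intro i hi
    simp only [Finset.mem_range, Nat.lt_succ_iff] at hi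
    rw [← Nat.add_mul]
    congr 1
    omega
  set M : ℕ := ∑ i ∈ Finset.Ico 1 t, (t - i) with hM
  have hTlb : t + k * M ≤ ∑ i ∈ Finset.range (t + 1), (t - i) * c i := by
    rcases Nat.eq_zero_or_pos t with rfl | htpos
    · simp [hM]
    have h1 : Finset.range (t + 1) = insert 0 (Finset.Ico 1 (t + 1)) := by
      ext i; simp [Finset.mem_Ico, Nat.lt_succ_iff]; omega
    rw [h1, Finset.sum_insert (by simp)]
    have h2 : Finset.Ico 1 (t + 1) = insert t (Finset.Ico 1 t) := by
      ext i; simp [Finset.mem_Ico, Nat.lt_succ_iff]; omega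
    rw [h2, Finset.sum_insert (by simp), Nat.sub_self, zero_mul, zero_add]
    have : k * M ≤ ∑ i ∈ Finset.Ico 1 t, (t - i) * c i := by
      rw [hM, Finset.mul_sum]
      apply Finset.sum_le_sum
      intro i hi
      simp only [Finset.mem_Ico] at hi
      rw [mul_comm]
      exact Nat.mul_le_mul_left _ (hlev i hi.1 (by omega))
    have h0 : (t - 0) * c 0 = t := by simp [hc0]
    omega
  have hmain : status G x + t + k * M ≤ t * n := by
    rw [hstat]; omega
  have h2M : 2 * M = t * (t - 1) := gauss_aux t
  -- cast to ℚ
  have hq : (status G x : ℚ) + t + k * M ≤ t * n := by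
    exact_mod_cast hmain
  have hq2 : (2 : ℚ) * M = t * ((t : ℚ) - 1) := by
    rcases Nat.eq_zero_or_pos t with rfl | htpos
    · have : M = 0 := by omega
      simp [this]
    have : ((2 * M : ℕ) : ℚ) = ((t * (t - 1) : ℕ) : ℚ) := by rw [h2M]
    push_cast [Nat.cast_sub htpos] at this
    linarith
  have hn1 : (1 : ℚ) ≤ n := by
    have : 1 ≤ n := by omega
    exact_mod_cast this
  have : (k : ℚ) * t * ((t : ℚ) - 1) / 2 = k * M := by
    field_simp
    nlinarith [hq2]
  rw [this]
  linarith
end
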